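/- Let k ≥ 1 and let D be the 'diamond' graph with vertex set {a, b, c, v_1, …, v_k, u_1, …, u_k} and edge set {(a,c)} ∪ {(a,v_i), (v_i,b), (b,u_i), (u_i,c) : 1 ≤ i ≤ k}. Then the simple cycles of D are exactly: (1) the cycles a, v_i, b, u_j, c, a for 1 ≤ i, j ≤ k; (2) the cycles a, v_i, b, v_j, a for 1 ≤ i < j ≤ k; (3) the cycles b, u_i, c, u_j, b for 1 ≤ i < j ≤ k. In particular D has exactly k^2 + k(k−1) = 2k^2 − k simple cycles. -/

import Mathlib

open SimpleGraph

/-- The vertices of the diamond graph: `a`, `b`, `c`, `v 1, …, v k`, `u 1, …, u k`. -/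
inductive DV (k : ℕ) where
  | a : DV k
  | b : DV k
  | c : DV k
  | v (i : Fin k) : DV k
  | u (i : Fin k) : DV k
deriving DecidableEq

/-- The diamond graph `D`: edges `{a,c}` and `{a, v i}, {v i, b}, {b, u i}, {u i, c}`
for `1 ≤ i ≤ k`. -/
def diamond (k : ℕ) : SimpleGraph (DV k) :=
  SimpleGraph.fromRel (fun x y =>
    (x = DV.a ∧ y = DV.c) ∨
    (∃ i, x = DV.a ∧ y = DV.v i) ∨ (∃ i, x = DV.v i ∧ y = DV.b) ∨
    (∃ i, x = DV.b ∧ y = DV.u i) ∨ (∃ i, x = DV.u i ∧ y = DV.c))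

/-- The set of simple cycles of the diamond graph, where a simple cycle (counted up to
rotation and reflection) is identified with its edge set. -/
def diamondCycles (k : ℕ) : Set (Finset (Sym2 (DV k))) :=
  {S | ∃ (x : DV k) (c : (diamond k).Walk x x), c.IsCycle ∧ c.edges.toFinset = S}

section Aux

set_option linter.unreachableTactic false
set_option linter.unusedTactic false

variable {k : ℕ}

lemma DC.adj_a {y : DV k} (h : (diamond k).Adj DV.a y) : y = DV.c ∨ ∃ i, y = DV.v i := by
  simp only [diamond, fromRel_adj] at h
  rcases h with ⟨-, h | h⟩ <;> aesop

lemma DC.adj_b {y : DV k} (h : (diamond k).Adj DV.b y) :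
    (∃ i, y = DV.v i) ∨ ∃ i, y = DV.u i := by
  simp only [diamond, fromRel_adj] at h
  rcases h with ⟨-, h | h⟩ <;> aesop

lemma DC.adj_c {y : DV k} (h : (diamond k).Adj DV.c y) : y = DV.a ∨ ∃ i, y = DV.u i := by
  simp only [diamond, fromRel_adj] at h
  rcases h with ⟨-, h | h⟩ <;> aesop

lemma DC.adj_v {i : Fin k} {y : DV k} (h : (diamond k).Adj (DV.v i) y) :
    y = DV.a ∨ y = DV.b := by
  simp only [diamond, fromRel_adj] at h
  rcases h with ⟨-, h | h⟩ <;> aesop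

lemma DC.adj_u {i : Fin k} {y : DV k} (h : (diamond k).Adj (DV.u i) y) :
    y = DV.b ∨ y = DV.c := by
  simp only [diamond, fromRel_adj] at h
  rcases h with ⟨-, h | h⟩ <;> aesop

/-- Edge set of a 5-cycle `a, v i, b, u j, c, a`. -/
def DC.set1 (i j : Fin k) : Finset (Sym2 (DV k)) :=
  {s(DV.a, DV.v i), s(DV.v i, DV.b), s(DV.b, DV.u j), s(DV.u j, DV.c), s(DV.c, DV.a)}

/-- Edge set of a 4-cycle `a, v i, b, v j, a`. -/
def DC.set2 (i j : Fin k) : Finset (Sym2 (DV k)) :=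
  {s(DV.a, DV.v i), s(DV.v i, DV.b), s(DV.b, DV.v j), s(DV.v j, DV.a)}

/-- Edge set of a 4-cycle `b, u i, c, u j, b`. -/
def DC.set3 (i j : Fin k) : Finset (Sym2 (DV k)) :=
  {s(DV.b, DV.u i), s(DV.u i, DV.c), s(DV.c, DV.u j), s(DV.u j, DV.b)}

open DC

lemma DC.crawlA (w : (diamond k).Walk DV.a DV.a) (hw : w.IsCycle) :
    (∃ i j : Fin k, w.edges.toFinset = set1 i j) ∨
    (∃ i j : Fin k, i ≠ j ∧ w.edges.toFinset = set2 i j) := by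
  have hs := hw.support_nodup
  have ht := hw.isTrail.edges_nodup
  cases w with
  | nil => exact absurd rfl hw.ne_nil
  | cons h1 p =>
  rcases adj_a h1 with rfl | ⟨i, rfl⟩
  · -- a → c
    cases p with
    | cons h2 q =>
    rcases adj_c h2 with rfl | ⟨i, rfl⟩
    · -- a → c → a : repeated edge
      simp [Sym2.eq_swap] at ht
    · -- a → c → u i
      cases q with
      | cons h3 r =>
      rcases adj_u h3 with rfl | rfl
      · -- a c u i b
        cases r with
        | cons h4 s =>
        rcases adj_b h4 with ⟨j, rfl⟩ | ⟨j, rfl⟩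
        · -- a c u i b v j
          cases s with
          | cons h5 t =>
          rcases adj_v h5 with rfl | rfl
          · -- a c u i b v j a
            cases t with
            | nil =>
              refine .inl ⟨j, i, ?_⟩
              ext e
              simp [set1, Sym2.eq_swap]
              try tauto
            | cons h6 t' => simp at hs
          · -- b repeated
            simp at hs
        · -- a c u i b u j → dead: next is b or c
          cases s with
          | cons h5 t =>
            rcases adj_u h5 with rfl | rfl <;> simp at hs
      · -- c repeated
        simp at hs
  · -- a → v i
    cases p with
    | cons h2 q =>
    rcases adj_v h2 with rfl | rfl
    · -- a v i a : repeated edge or a repeated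
      cases q with
      | nil => simp [Sym2.eq_swap] at ht
      | cons h3 r => simp at hs
    · -- a v i b
      cases q with
      | cons h3 r =>
      rcases adj_b h3 with ⟨j, rfl⟩ | ⟨j, rfl⟩
      · -- a v i b v j
        cases r with
        | cons h4 s =>
        rcases adj_v h4 with rfl | rfl
        · -- a v i b v j a
          cases s with
          | nil =>
            refine .inr ⟨i, j, ?_, ?_⟩
            · simp at hs; rintro rfl; simp at hs
            · ext e
              simp [set2, Sym2.eq_swap]
              try tauto
          | cons h5 t => simp at hs
        · -- b repeated
          simp at hs
      · -- a v i b u j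
        cases r with
        | cons h4 s =>
        rcases adj_u h4 with rfl | rfl
        · -- b repeated
          simp at hs
        · -- a v i b u j c
          cases s with
          | cons h5 t =>
          rcases adj_c h5 with rfl | ⟨l, rfl⟩
          · -- a v i b u j c a
            cases t with
            | nil =>
              refine .inl ⟨i, j, ?_⟩
              ext e
              simp [set1, Sym2.eq_swap]
              try tauto
            | cons h6 t' => simp at hs
          · -- a v i b u j c u l → dead
            cases t with
            | cons h6 t' =>
              rcases adj_u h6 with rfl | rfl <;> simp at hs

lemma DC.crawlC (w : (diamond k).Walk DV.c DV.c) (hw : w.IsCycle) (ha : DV.a ∉ w.support) :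
    ∃ i j : Fin k, i ≠ j ∧ w.edges.toFinset = set3 i j := by
  have hs := hw.support_nodup
  have ht := hw.isTrail.edges_nodup
  cases w with
  | nil => exact absurd rfl hw.ne_nil
  | cons h1 p =>
  rcases adj_c h1 with rfl | ⟨i, rfl⟩
  · simp at ha
  · cases p with
    | cons h2 q =>
    rcases adj_u h2 with rfl | rfl
    · -- c u i b
      cases q with
      | cons h3 r =>
      rcases adj_b h3 with ⟨j, rfl⟩ | ⟨j, rfl⟩
      · -- c u i b v j → dead
        cases r with
        | cons h4 s =>
          rcases adj_v h4 with rfl | rfl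
          · simp at ha
          · simp at hs
      · -- c u i b u j
        cases r with
        | cons h4 s =>
        rcases adj_u h4 with rfl | rfl
        · simp at hs
        · -- c u i b u j c
          cases s with
          | nil =>
            refine ⟨i, j, ?_, ?_⟩
            · simp at hs; rintro rfl; simp at hs
            · ext e
              simp [set3, Sym2.eq_swap]
              try tauto
          | cons h5 t => simp at hs
    · -- c repeated
      cases q with
      | nil => simp [Sym2.eq_swap] at ht
      | cons h3 r => simp at hs

lemma DC.crawlNo (x : DV k) (w : (diamond k).Walk x x) (hw : w.IsCycle)
    (ha : DV.a ∉ w.support) (hc : DV.c ∉ w.support) : False := by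
  have hs := hw.support_nodup
  have hl := hw.three_le_length
  cases x with
  | a => simp at ha
  | c => simp at hc
  | v i =>
    cases w with
    | nil => exact absurd rfl hw.ne_nil
    | cons h1 p =>
    rcases adj_v h1 with rfl | rfl
    · simp at ha
    · cases p with
      | cons h2 q =>
      rcases adj_b h2 with ⟨j, rfl⟩ | ⟨j, rfl⟩
      · cases q with
        | nil => simp at hl
        | cons h3 r =>
          rcases adj_v h3 with rfl | rfl
          · simp at ha
          · simp at hs
      · cases q with
        | cons h3 r =>
          rcases adj_u h3 with rfl | rfl
          · simp at hs
          · simp at hc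
  | u i =>
    cases w with
    | nil => exact absurd rfl hw.ne_nil
    | cons h1 p =>
    rcases adj_u h1 with rfl | rfl
    · cases p with
      | cons h2 q =>
      rcases adj_b h2 with ⟨j, rfl⟩ | ⟨j, rfl⟩
      · cases q with
        | cons h3 r =>
          rcases adj_v h3 with rfl | rfl
          · simp at ha
          · simp at hs
      · cases q with
        | nil => simp at hl
        | cons h3 r =>
          rcases adj_u h3 with rfl | rfl
          · simp at hs
          · simp at hc
    · simp at hc
  | b =>
    cases w with
    | nil => exact absurd rfl hw.ne_nil
    | cons h1 p =>
    rcases adj_b h1 with ⟨j, rfl⟩ | ⟨j, rfl⟩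
    · cases p with
      | cons h2 q =>
      rcases adj_v h2 with rfl | rfl
      · simp at ha
      · cases q with
        | nil => simp at hl
        | cons h3 r => simp at hs
    · cases p with
      | cons h2 q =>
      rcases adj_u h2 with rfl | rfl
      · cases q with
        | nil => simp at hl
        | cons h3 r => simp at hs
      · simp at hc

lemma DC.adjAC : (diamond k).Adj DV.a DV.c := by
  simp only [diamond, fromRel_adj]; aesop

lemma DC.adjAV (i : Fin k) : (diamond k).Adj DV.a (DV.v i) := by
  simp only [diamond, fromRel_adj]; aesop

lemma DC.adjVB (i : Fin k) : (diamond k).Adj (DV.v i) DV.b := by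
  simp only [diamond, fromRel_adj]; aesop

lemma DC.adjBU (i : Fin k) : (diamond k).Adj DV.b (DV.u i) := by
  simp only [diamond, fromRel_adj]; aesop

lemma DC.adjUC (i : Fin k) : (diamond k).Adj (DV.u i) DV.c := by
  simp only [diamond, fromRel_adj]; aesop

open SimpleGraph.Walk in
/-- The 5-cycle `a, v i, b, u j, c, a` as a walk. -/
def DC.w1 (i j : Fin k) : (diamond k).Walk DV.a DV.a :=
  cons (adjAV i) (cons (adjVB i) (cons (adjBU j) (cons (adjUC j) (cons adjAC.symm nil))))

open SimpleGraph.Walk in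
/-- The 4-cycle `a, v i, b, v j, a` as a walk. -/
def DC.w2 (i j : Fin k) : (diamond k).Walk DV.a DV.a :=
  cons (adjAV i) (cons (adjVB i) (cons (adjVB j).symm (cons (adjAV j).symm nil)))

open SimpleGraph.Walk in
/-- The 4-cycle `b, u i, c, u j, b` as a walk. -/
def DC.w3 (i j : Fin k) : (diamond k).Walk DV.b DV.b :=
  cons (adjBU i) (cons (adjUC i) (cons (adjUC j).symm (cons (adjBU j).symm nil)))

lemma DC.w1_cycle (i j : Fin k) : (w1 i j).IsCycle := by
  constructor
  constructor
  constructor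
  · simp [w1, Walk.edges, Sym2.eq_swap]
  · simp [w1]
  · simp [w1]

lemma DC.w2_cycle (i j : Fin k) (hij : i ≠ j) : (w2 i j).IsCycle := by
  constructor
  constructor
  constructor
  · simp [w2, Walk.edges, Sym2.eq_swap]; simpa using hij
  · simp [w2]
  · simp [w2]; simpa using hij

lemma DC.w3_cycle (i j : Fin k) (hij : i ≠ j) : (w3 i j).IsCycle := by
  constructor
  constructor
  constructor
  · simp [w3, Walk.edges, Sym2.eq_swap]; simpa using hij
  · simp [w3]
  · simp [w3]; simpa using hij

lemma DC.w1_edges (i j : Fin k) : (w1 i j).edges.toFinset = set1 i j := by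
  simp [w1, set1, Sym2.eq_swap]

lemma DC.w2_edges (i j : Fin k) : (w2 i j).edges.toFinset = set2 i j := by
  simp [w2, set2, Sym2.eq_swap]

lemma DC.w3_edges (i j : Fin k) : (w3 i j).edges.toFinset = set3 i j := by
  simp [w3, set3, Sym2.eq_swap]

lemma DC.swap2 (i j : Fin k) : set2 i j = set2 j i := by
  ext e; simp [set2, Sym2.eq_swap]; tauto

lemma DC.swap3 (i j : Fin k) : set3 i j = set3 j i := by
  ext e; simp [set3, Sym2.eq_swap]; tauto

lemma DC.set1_inj (i j i' j' : Fin k) (h : set1 i j = set1 i' j') : i = i' ∧ j = j' := by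
  have h1 : s(DV.a, DV.v i) ∈ set1 i' j' := by rw [← h]; simp [set1]
  have h2 : s(DV.b, DV.u j) ∈ set1 i' j' := by rw [← h]; simp [set1]
  simp [set1, Sym2.eq_iff] at h1 h2
  tauto

lemma DC.set2_inj (i j i' j' : Fin k) (hij : i < j) (hij' : i' < j')
    (h : set2 i j = set2 i' j') : i = i' ∧ j = j' := by
  have h1 : s(DV.a, DV.v i) ∈ set2 i' j' := by rw [← h]; simp [set2]
  have h2 : s(DV.b, DV.v j) ∈ set2 i' j' := by rw [← h]; simp [set2]
  simp [set2, Sym2.eq_iff] at h1 h2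
  rcases h1 with rfl | rfl <;> rcases h2 with rfl | rfl <;>
    first
      | exact ⟨rfl, rfl⟩
      | exact absurd hij (lt_irrefl _)
      | exact absurd hij' (lt_irrefl _)
      | exact absurd (hij.trans hij') (lt_irrefl _)
      | exact absurd (hij'.trans hij) (lt_irrefl _)

lemma DC.set3_inj (i j i' j' : Fin k) (hij : i < j) (hij' : i' < j')
    (h : set3 i j = set3 i' j') : i = i' ∧ j = j' := by
  have h1 : s(DV.b, DV.u i) ∈ set3 i' j' := by rw [← h]; simp [set3]
  have h2 : s(DV.c, DV.u j) ∈ set3 i' j' := by rw [← h]; simp [set3]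
  simp [set3, Sym2.eq_iff] at h1 h2
  rcases h1 with rfl | rfl <;> rcases h2 with rfl | rfl <;>
    first
      | exact ⟨rfl, rfl⟩
      | exact absurd hij (lt_irrefl _)
      | exact absurd hij' (lt_irrefl _)
      | exact absurd (hij.trans hij') (lt_irrefl _)
      | exact absurd (hij'.trans hij) (lt_irrefl _)

lemma DC.set12_ne (i j i' j' : Fin k) : set1 i j ≠ set2 i' j' := by
  intro h
  have : s(DV.c, DV.a) ∈ set2 i' j' := by rw [← h]; simp [set1]
  simp [set2, Sym2.eq_iff] at this

lemma DC.set13_ne (i j i' j' : Fin k) : set1 i j ≠ set3 i' j' := by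
  intro h
  have : s(DV.c, DV.a) ∈ set3 i' j' := by rw [← h]; simp [set1]
  simp [set3, Sym2.eq_iff] at this

lemma DC.set23_ne (i j i' j' : Fin k) : set2 i j ≠ set3 i' j' := by
  intro h
  have : s(DV.a, DV.v i) ∈ set3 i' j' := by rw [← h]; simp [set2]
  simp [set3, Sym2.eq_iff] at this

lemma DC.card_lt_pairs : 2 * ((Finset.univ.filter
    fun p : Fin k × Fin k => p.1 < p.2).card) = k * k - k := by
  have e1 : (Finset.univ.filter fun p : Fin k × Fin k => p.2 < p.1) =
      (Finset.univ.filter fun p : Fin k × Fin k => p.1 < p.2).image Prod.swap := by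
    ext ⟨x, y⟩
    simp [Prod.ext_iff]
  have e2 : ((Finset.univ.filter fun p : Fin k × Fin k => p.2 < p.1)).card =
      (Finset.univ.filter fun p : Fin k × Fin k => p.1 < p.2).card := by
    rw [e1, Finset.card_image_of_injective _ Prod.swap_injective]
  have e3 : (Finset.univ.filter fun p : Fin k × Fin k => p.1 < p.2) ∪
      (Finset.univ.filter fun p : Fin k × Fin k => p.2 < p.1) =
      Finset.univ.filter fun p : Fin k × Fin k => p.1 ≠ p.2 := by
    ext ⟨x, y⟩
    simp only [Finset.mem_union, Finset.mem_filter, Finset.mem_univ, true_and]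
    exact ne_iff_lt_or_gt.symm
  have e4 : Disjoint (Finset.univ.filter fun p : Fin k × Fin k => p.1 < p.2)
      (Finset.univ.filter fun p : Fin k × Fin k => p.2 < p.1) := by
    simp only [Finset.disjoint_left, Finset.mem_filter, Finset.mem_univ, true_and]
    exact fun {p} h1 h2 => absurd (h1.trans h2) (lt_irrefl _)
  have e5 : (Finset.univ.filter fun p : Fin k × Fin k => p.1 ≠ p.2) =
      (Finset.univ : Finset (Fin k)).offDiag := by
    ext ⟨x, y⟩; simp [Finset.mem_offDiag]
  have := Finset.card_union_of_disjoint e4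
  rw [e3, e5, Finset.offDiag_card, e2] at this
  simp [Finset.card_univ] at this ⊢
  omega

end Aux

open DC in
/-- For `k ≥ 1`, the simple cycles of the diamond graph are exactly:
(1) `a, v i, b, u j, c, a` for `1 ≤ i, j ≤ k`;
(2) `a, v i, b, v j, a` for `1 ≤ i < j ≤ k`;
(3) `b, u i, c, u j, b` for `1 ≤ i < j ≤ k`.
In particular the diamond graph has exactly `2k² − k` simple cycles. -/
theorem diamond_cycles (k : ℕ) (hk : 1 ≤ k) :
    diamondCycles k =
      {S | (∃ i j : Fin k,
              S = {s(DV.a, DV.v i), s(DV.v i, DV.b), s(DV.b, DV.u j),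
                   s(DV.u j, DV.c), s(DV.c, DV.a)}) ∨
           (∃ i j : Fin k, i < j ∧
              S = {s(DV.a, DV.v i), s(DV.v i, DV.b), s(DV.b, DV.v j), s(DV.v j, DV.a)}) ∨
           (∃ i j : Fin k, i < j ∧
              S = {s(DV.b, DV.u i), s(DV.u i, DV.c), s(DV.c, DV.u j), s(DV.u j, DV.b)})} ∧
    (diamondCycles k).ncard = 2 * k ^ 2 - k := by
  classical
  have hset : diamondCycles k =
      {S | (∃ i j : Fin k, S = set1 i j) ∨
           (∃ i j : Fin k, i < j ∧ S = set2 i j) ∨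
           (∃ i j : Fin k, i < j ∧ S = set3 i j)} := by
    ext S
    constructor
    · rintro ⟨x, w, hw, rfl⟩
      by_cases hA : DV.a ∈ w.support
      · have hw' := hw.rotate hA
        have hperm : (w.rotate _ hA).edges.toFinset = w.edges.toFinset :=
          List.toFinset_eq_of_perm _ _ (w.rotate_edges _ hA).perm
        rcases crawlA _ hw' with ⟨i, j, he⟩ | ⟨i, j, hne, he⟩
        · exact .inl ⟨i, j, by rw [← hperm, he]⟩
        · rcases hne.lt_or_gt with hlt | hlt
          · exact .inr (.inl ⟨i, j, hlt, by rw [← hperm, he]⟩)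
          · exact .inr (.inl ⟨j, i, hlt, by rw [← hperm, he, swap2]⟩)
      · by_cases hC : DV.c ∈ w.support
        · have hw' := hw.rotate hC
          have hA' : DV.a ∉ (w.rotate _ hC).support := by
            intro hmem
            rw [Walk.mem_support_iff] at hmem
            rcases hmem with h' | h'
            · simp at h'
            · exact hA (List.mem_of_mem_tail ((w.support_rotate _ hC).mem_iff.mp h'))
          have hperm : (w.rotate _ hC).edges.toFinset = w.edges.toFinset :=
            List.toFinset_eq_of_perm _ _ (w.rotate_edges _ hC).perm
          obtain ⟨i, j, hne, he⟩ := crawlC _ hw' hA'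
          rcases hne.lt_or_gt with hlt | hlt
          · exact .inr (.inr ⟨i, j, hlt, by rw [← hperm, he]⟩)
          · exact .inr (.inr ⟨j, i, hlt, by rw [← hperm, he, swap3]⟩)
        · exact (crawlNo x w hw hA hC).elim
    · rintro (⟨i, j, rfl⟩ | ⟨i, j, hlt, rfl⟩ | ⟨i, j, hlt, rfl⟩)
      · exact ⟨_, w1 i j, w1_cycle i j, w1_edges i j⟩
      · exact ⟨_, w2 i j, w2_cycle i j hlt.ne, w2_edges i j⟩
      · exact ⟨_, w3 i j, w3_cycle i j hlt.ne, w3_edges i j⟩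
  refine ⟨hset, ?_⟩
  set P := Finset.univ.filter (fun p : Fin k × Fin k => p.1 < p.2) with hP
  have hFin : diamondCycles k =
      ↑((Finset.univ.image fun p : Fin k × Fin k => set1 p.1 p.2) ∪
        (P.image fun p => set2 p.1 p.2) ∪ (P.image fun p => set3 p.1 p.2)) := by
    rw [hset]
    ext S
    simp only [Set.mem_setOf_eq, Finset.coe_union, Set.mem_union, Finset.coe_image,
      Set.mem_image, Finset.mem_coe, Finset.mem_filter, Finset.mem_univ, true_and,
      Finset.mem_image, hP]
    constructor
    · rintro (⟨i, j, rfl⟩ | ⟨i, j, hlt, rfl⟩ | ⟨i, j, hlt, rfl⟩)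
      · exact .inl (.inl ⟨(i, j), rfl⟩)
      · exact .inl (.inr ⟨(i, j), by simp [hP, hlt], rfl⟩)
      · exact .inr ⟨(i, j), by simp [hP, hlt], rfl⟩
    · rintro ((⟨⟨i, j⟩, -, rfl⟩ | ⟨⟨i, j⟩, hp, rfl⟩) | ⟨⟨i, j⟩, hp, rfl⟩)
      · exact .inl ⟨i, j, rfl⟩
      · exact .inr (.inl ⟨i, j, by simpa [hP] using hp, rfl⟩)
      · exact .inr (.inr ⟨i, j, by simpa [hP] using hp, rfl⟩)
  rw [hFin, Set.ncard_coe_finset]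
  have inj1 : Function.Injective (fun p : Fin k × Fin k => (set1 p.1 p.2 : Finset (Sym2 (DV k)))) := by
    rintro ⟨i, j⟩ ⟨i', j'⟩ h
    obtain ⟨h1, h2⟩ := set1_inj i j i' j' h
    simp [h1, h2]
  have c1 : (Finset.univ.image fun p : Fin k × Fin k => set1 p.1 p.2).card = k * k := by
    rw [Finset.card_image_of_injective _ inj1, Finset.card_univ]
    simp
  have c2 : (P.image fun p => set2 p.1 p.2).card = P.card := by
    apply Finset.card_image_of_injOn
    rintro ⟨i, j⟩ hp ⟨i', j'⟩ hq h
    simp only [hP, Finset.mem_coe, Finset.mem_filter, Finset.mem_univ, true_and] at hp hq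
    obtain ⟨h1, h2⟩ := set2_inj i j i' j' hp hq h
    simp [h1, h2]
  have c3 : (P.image fun p => set3 p.1 p.2).card = P.card := by
    apply Finset.card_image_of_injOn
    rintro ⟨i, j⟩ hp ⟨i', j'⟩ hq h
    simp only [hP, Finset.mem_coe, Finset.mem_filter, Finset.mem_univ, true_and] at hp hq
    obtain ⟨h1, h2⟩ := set3_inj i j i' j' hp hq h
    simp [h1, h2]
  have d2 : Disjoint (P.image fun p => set2 p.1 p.2) (P.image fun p => set3 p.1 p.2) := by
    simp only [Finset.disjoint_left, Finset.mem_image]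
    rintro S ⟨⟨i, j⟩, -, rfl⟩ ⟨⟨i', j'⟩, -, h⟩
    exact set23_ne i j i' j' h.symm
  have d1 : Disjoint (Finset.univ.image fun p : Fin k × Fin k => set1 p.1 p.2)
      ((P.image fun p => set2 p.1 p.2) ∪ (P.image fun p => set3 p.1 p.2)) := by
    simp only [Finset.disjoint_left, Finset.mem_union, Finset.mem_image]
    rintro S ⟨⟨i, j⟩, -, rfl⟩ (⟨⟨i', j'⟩, -, h⟩ | ⟨⟨i', j'⟩, -, h⟩)
    · exact set12_ne i j i' j' h.symm
    · exact set13_ne i j i' j' h.symm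
  rw [Finset.union_assoc, Finset.card_union_of_disjoint d1,
    Finset.card_union_of_disjoint d2, c1, c2, c3]
  have hc := card_lt_pairs (k := k)
  have hk2 : k ^ 2 = k * k := sq k
  have hkk : k ≤ k * k := Nat.le_mul_of_pos_left k hk
  rw [← hP] at hc
  omega
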